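/- Let F be a field and n ≥ 3. The subspace P = {λ ∈ Sk_n(F) : λ_{ijk} = 0 whenever k ∉ {i,j}, and λ_{iji} = λ_{kjk} whenever j ∉ {i,k}} of F^(n³) has dimension n over F. -/
import Mathlib


/-- the set `P` of skew structure vectors with `λ_{ijk} = 0` for
`k ∉ {i,j}` and `λ_{iji} = λ_{kjk}` for `j ∉ {i,k}` is an `F`-subspace of `F^(n³)` of
dimension `n` (for `n ≥ 3`). -/
theorem dim_P_eq_n {F : Type*} [Field F] (n : ℕ) (hn : 3 ≤ n) :
    ∃ W : Submodule F (Fin n → Fin n → Fin n → F),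
      (W : Set (Fin n → Fin n → Fin n → F)) =
        {lam | (∀ i k, lam i i k = 0) ∧ (∀ i j k, lam i j k + lam j i k = 0) ∧
          (∀ i j k : Fin n, k ≠ i → k ≠ j → lam i j k = 0) ∧
          (∀ i j k : Fin n, j ≠ i → j ≠ k → lam i j i = lam k j k)} ∧
      Module.finrank F W = n := by
  have h0 : 0 < n := by omega
  have h1 : 1 < n := by omega
  -- a function picking an element distinct from j
  set o : Fin n → Fin n := fun j => if j = ⟨0, h0⟩ then ⟨1, h1⟩ else ⟨0, h0⟩ with ho
  have hoj : ∀ j, o j ≠ j := by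
    intro j
    simp only [ho]
    split_ifs with h
    · subst h; simp [Fin.ext_iff]
    · exact fun hc => h hc.symm
  -- the linear parametrization
  set φ : (Fin n → F) →ₗ[F] (Fin n → Fin n → Fin n → F) :=
    { toFun := fun c i j k =>
        (if i ≠ j ∧ k = i then c j else 0) - (if i ≠ j ∧ k = j then c i else 0)
      map_add' := by
        intro c d; funext i j k; simp only [Pi.add_apply]
        split_ifs <;> ring
      map_smul' := by
        intro a c; funext i j k
        simp only [Pi.smul_apply, smul_eq_mul, RingHom.id_apply]
        split_ifs <;> ring } with hφ
  have hφ_apply : ∀ c i j k, φ c i j k =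
      (if i ≠ j ∧ k = i then c j else 0) - (if i ≠ j ∧ k = j then c i else 0) := by
    intro c i j k; rfl
  have val0 : ∀ (c : Fin n → F) i k, φ c i i k = 0 := by
    intro c i k
    rw [hφ_apply, if_neg (fun hc => hc.1 rfl)]; ring
  have val1 : ∀ (c : Fin n → F) i j, i ≠ j → φ c i j i = c j := by
    intro c i j h
    rw [hφ_apply, if_pos ⟨h, rfl⟩, if_neg (fun hc => hc.1 hc.2)]; ring
  have val2 : ∀ (c : Fin n → F) i j, i ≠ j → φ c i j j = -c i := by
    intro c i j h
    rw [hφ_apply, if_neg (fun hc => hc.1 hc.2.symm), if_pos ⟨h, rfl⟩]; ring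
  have val3 : ∀ (c : Fin n → F) i j k, k ≠ i → k ≠ j → φ c i j k = 0 := by
    intro c i j k hki hkj
    rw [hφ_apply, if_neg (fun hc => hki hc.2), if_neg (fun hc => hkj hc.2)]; ring
  refine ⟨LinearMap.range φ, ?_, ?_⟩
  · ext lam
    simp only [SetLike.mem_coe, LinearMap.mem_range, Set.mem_setOf_eq]
    constructor
    · rintro ⟨c, rfl⟩
      refine ⟨fun i k => val0 c i k, ?_, fun i j k hki hkj => val3 c i j k hki hkj, ?_⟩
      · intro i j k
        rcases eq_or_ne i j with h | h
        · subst h; rw [val0]; ring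
        · rcases eq_or_ne k i with hk | hk
          · subst hk; rw [val1 c k j h, val2 c j k (Ne.symm h)]; ring
          · rcases eq_or_ne k j with hk2 | hk2
            · subst hk2; rw [val2 c i k h, val1 c k i (Ne.symm h)]; ring
            · rw [val3 c i j k hk hk2, val3 c j i k hk2 hk]; ring
      · intro i j k hji hjk
        rw [val1 c i j (Ne.symm hji), val1 c k j (Ne.symm hjk)]
    · rintro ⟨hdiag, hskew, hzero, hconst⟩
      refine ⟨fun j => lam (o j) j (o j), ?_⟩
      funext i j k
      rcases eq_or_ne i j with h | h
      · subst h; rw [val0, hdiag]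
      · rcases eq_or_ne k i with hk | hk
        · subst hk
          rw [val1 _ k j h]
          exact hconst (o j) j k (fun hc => (hoj j) hc.symm) (Ne.symm h)
        · rcases eq_or_ne k j with hk2 | hk2
          · subst hk2
            rw [val2 _ i k h]
            have h1 := hconst (o i) i k (fun hc => (hoj i) hc.symm) h
            have h2 := hskew i k k
            rw [← h1] at h2
            linear_combination -h2
          · rw [val3 _ i j k hk hk2, hzero i j k hk hk2]
  · have hinj : Function.Injective φ := by
      intro c d hcd
      funext j
      have := congrFun (congrFun (congrFun hcd (o j)) j) (o j)
      rwa [val1 c (o j) j (hoj j), val1 d (o j) j (hoj j)] at this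
    rw [LinearMap.finrank_range_of_inj hinj]
    simp
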